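/- Let S and S' be submonoids of the additive monoid ℕ → ℤ (pointwise addition), each endowed with the subspace topology from the product topology on ℕ → ℤ where ℤ is discrete. Assume that the subgroup of ℕ → ℤ generated by S is all of ℕ → ℤ. Then every monoid homomorphism β : S → S' is continuous. -/

import Mathlib

/-- Auxiliary recursion for Specker's theorem: given a sequence `a` of (nonzero) values,
produce pairs `(d i, s i)` with `d` a rapidly growing divisibility chain and
`s i = ∑_{j ≤ i} d j * a j`. -/
private def speckerD (a : ℕ → ℤ) : ℕ → ℤ × ℤ
  | 0 => (1, a 0)
  | i + 1 =>
    let p := speckerD a i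
    let d := p.1 * (2 * (|p.2| + 1))
    (d, p.2 + d * a (i + 1))

private lemma speckerD_pos (a : ℕ → ℤ) : ∀ i, 0 < (speckerD a i).1 := by
  intro i
  induction i with
  | zero => norm_num [speckerD]
  | succ i ih =>
      have h : 0 < 2 * (|(speckerD a i).2| + 1) := by positivity
      simpa [speckerD] using mul_pos ih h

private lemma speckerD_dvd (a : ℕ → ℤ) {i j : ℕ} (h : i ≤ j) :
    (speckerD a i).1 ∣ (speckerD a j).1 := by
  induction j with
  | zero => simpa [Nat.le_zero.mp h]
  | succ j ih =>
      rcases Nat.lt_or_ge i (j + 1) with h' | h'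
      · exact (ih (Nat.lt_succ_iff.mp h')).trans (by simpa [speckerD] using dvd_mul_right _ _)
      · have : i = j + 1 := le_antisymm h h'
        simp [this]

private lemma speckerD_ge_two_pow (a : ℕ → ℤ) : ∀ i, 2 ^ i ≤ (speckerD a i).1 := by
  intro i
  induction i with
  | zero => norm_num [speckerD]
  | succ i ih =>
      have habs : 0 ≤ |(speckerD a i).2| := abs_nonneg _
      have h2 : (speckerD a (i + 1)).1 = (speckerD a i).1 * (2 * (|(speckerD a i).2| + 1)) := rfl
      have hfac : (2:ℤ) ≤ 2 * (|(speckerD a i).2| + 1) := by linarith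
      have hp : (0:ℤ) < 2 ^ i := by positivity
      calc (2:ℤ) ^ (i + 1) = 2 ^ i * 2 := by ring
        _ ≤ (speckerD a i).1 * 2 := by nlinarith
        _ ≤ (speckerD a i).1 * (2 * (|(speckerD a i).2| + 1)) := by
            exact mul_le_mul_of_nonneg_left hfac (by linarith [speckerD_pos a i])
        _ = (speckerD a (i + 1)).1 := h2.symm

private lemma speckerD_growth (a : ℕ → ℤ) (i : ℕ) :
    |(speckerD a i).2| + 2 ^ (i + 1) ≤ (speckerD a (i + 1)).1 := by
  have h1 : 2 ^ i ≤ (speckerD a i).1 := speckerD_ge_two_pow a i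
  have h2 : (speckerD a (i + 1)).1 = (speckerD a i).1 * (2 * (|(speckerD a i).2| + 1)) := rfl
  have habs : 0 ≤ |(speckerD a i).2| := abs_nonneg _
  have hp : (0:ℤ) < 2 ^ i := by positivity
  rw [h2]; ring_nf; nlinarith

/-- Specker's theorem, continuity form: any additive homomorphism `ℤ^ω → ℤ` vanishes on
all sequences that vanish on a sufficiently long initial segment. -/
private lemma specker (φ : (ℕ → ℤ) →+ ℤ) :
    ∃ N : ℕ, ∀ x : ℕ → ℤ, (∀ k < N, x k = 0) → φ x = 0 := by
  by_contra hcon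
  push_neg at hcon
  choose x hx0 hxφ using hcon
  set a : ℕ → ℤ := fun i => φ (x i) with ha
  set d : ℕ → ℤ := fun i => (speckerD a i).1 with hd
  set s : ℕ → ℤ := fun i => (speckerD a i).2 with hs
  have hs_succ : ∀ i, s (i + 1) = s i + d (i + 1) * a (i + 1) := by
    intro i; simp [hs, hd, speckerD]
  have hd_pos : ∀ i, 0 < d i := speckerD_pos a
  have hd_dvd : ∀ {i j : ℕ}, i ≤ j → d i ∣ d j := fun h => speckerD_dvd a h
  -- the diagonal element
  set y : ℕ → ℤ := fun n => ∑ j ∈ Finset.range (n + 1), d j * x j n with hy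
  -- partial sums as elements of ℤ^ω
  set w : ℕ → (ℕ → ℤ) := fun i => ∑ j ∈ Finset.range (i + 1), d j • x j with hw
  have hφw : ∀ i, φ (w i) = s i := by
    intro i
    induction i with
    | zero =>
        have h0 : w 0 = d 0 • x 0 := by simp [hw]
        have hd0 : d 0 = 1 := rfl
        rw [h0, map_zsmul, hd0]
        simp [hs, ha, speckerD]
    | succ i ih =>
        have : w (i + 1) = w i + d (i + 1) • x (i + 1) := by
          simp [hw, Finset.sum_range_succ]
        rw [this, map_add, ih, map_zsmul, hs_succ]
        simp [ha]
  -- tails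
  set z : ℕ → (ℕ → ℤ) := fun i n =>
    ∑ j ∈ Finset.Ico (i + 1) (n + 1), (d j / d (i + 1)) * x j n with hz
  have key : ∀ i, y = w i + d (i + 1) • z i := by
    intro i
    funext n
    have hwn : w i n = ∑ j ∈ Finset.range (i + 1), d j * x j n := by
      simp [hw, Finset.sum_apply]
    set m := max (n + 1) (i + 1) with hm
    have h1 : y n = ∑ j ∈ Finset.range m, d j * x j n := by
      apply Finset.sum_subset
      · exact Finset.range_subset_range.mpr (le_max_left _ _)
      · intro j _ hj
        have hnj : n < j := by simpa [Finset.mem_range] using hj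
        rw [hx0 j n hnj, mul_zero]
    have h2 : ∑ j ∈ Finset.range m, d j * x j n
        = (∑ j ∈ Finset.range (i + 1), d j * x j n)
          + ∑ j ∈ Finset.Ico (i + 1) m, d j * x j n := by
      rw [Finset.range_eq_Ico, ← Finset.sum_Ico_consecutive _ (Nat.zero_le _) (le_max_right _ _)]
      simp only [Finset.range_eq_Ico, hm]
    have h3 : ∑ j ∈ Finset.Ico (i + 1) m, d j * x j n = d (i + 1) * z i n := by
      have : d (i + 1) * z i n
          = ∑ j ∈ Finset.Ico (i + 1) (n + 1), d (i + 1) * ((d j / d (i + 1)) * x j n) := by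
        simp [hz, Finset.mul_sum]
      rw [this]
      have hterm : ∀ j ∈ Finset.Ico (i + 1) (n + 1),
          d (i + 1) * ((d j / d (i + 1)) * x j n) = d j * x j n := by
        intro j hj
        have hij : i + 1 ≤ j := (Finset.mem_Ico.mp hj).1
        rw [← mul_assoc, Int.mul_ediv_cancel' (hd_dvd hij)]
      rw [Finset.sum_congr rfl hterm]
      refine (Finset.sum_subset ?_ ?_).symm
      · exact Finset.Ico_subset_Ico le_rfl (le_max_left _ _)
      · intro j hj hj'
        have hij : i + 1 ≤ j := (Finset.mem_Ico.mp hj).1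
        have hnj : ¬ j < n + 1 := by
          intro hlt
          exact hj' (Finset.mem_Ico.mpr ⟨hij, hlt⟩)
        rw [hx0 j n (by omega), mul_zero]
    simp only [Pi.add_apply, Pi.smul_apply, smul_eq_mul]
    rw [hwn, h1, h2, h3]
  have hdvd : ∀ i, d (i + 1) ∣ φ y - s i := by
    intro i
    rw [key i, map_add, map_zsmul, hφw, zsmul_eq_mul]
    simp
  -- now derive a contradiction
  set M := φ y with hM
  have hbig : ∃ i : ℕ, |M| < 2 ^ (i + 1) := by
    refine ⟨|M|.toNat, ?_⟩
    have h1 : |M| ≤ (|M|.toNat : ℤ) := by simp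
    have h2 : (|M|.toNat : ℤ) < 2 ^ |M|.toNat := by
      exact_mod_cast Nat.lt_two_pow_self
    calc |M| ≤ (|M|.toNat : ℤ) := h1
      _ < 2 ^ |M|.toNat := h2
      _ ≤ 2 ^ (|M|.toNat + 1) := by
          apply pow_le_pow_right₀ (by norm_num) (Nat.le_succ _)
  obtain ⟨i, hi⟩ := hbig
  have heq : ∀ j, |M| < 2 ^ (j + 1) → M = s j := by
    intro j hj
    have h1 : |M - s j| < d (j + 1) := by
      have := speckerD_growth a j
      have habs : |M - s j| ≤ |M| + |s j| := abs_sub _ _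
      calc |M - s j| ≤ |M| + |s j| := habs
        _ < 2 ^ (j + 1) + |s j| := by linarith
        _ ≤ d (j + 1) := by
            have := speckerD_growth a j
            simp only [hd, hs] at *
            linarith
    have := Int.eq_zero_of_abs_lt_dvd (hdvd j) h1
    linarith [abs_nonneg (M - s j), this]
  have hij : M = s i := heq i hi
  have hij' : M = s (i + 1) := by
    apply heq
    calc |M| < 2 ^ (i + 1) := hi
      _ ≤ 2 ^ (i + 1 + 1) := by apply pow_le_pow_right₀ (by norm_num) (Nat.le_succ _)
  have hne : s (i + 1) ≠ s i := by
    rw [hs_succ]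
    have h1 : d (i + 1) * a (i + 1) ≠ 0 :=
      mul_ne_zero (hd_pos (i + 1)).ne' (hxφ (i + 1))
    intro h
    exact h1 (by linarith)
  exact hne (hij' ▸ hij ▸ rfl)

theorem submonoid_hom_continuous
    (S S' : AddSubmonoid (ℕ → ℤ))
    (hgen : AddSubgroup.closure (S : Set (ℕ → ℤ)) = ⊤)
    (β : S →+ S') :
    Continuous β := by
  classical
  set g : S →+ (ℕ → ℤ) := S'.subtype.comp β with hg
  -- every element of ℤ^ω is a difference of two elements of S
  have decomp : ∀ v : ℕ → ℤ, ∃ a b : S, v = (a : ℕ → ℤ) - (b : ℕ → ℤ) := by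
    intro v
    have hv : v ∈ AddSubgroup.closure (S : Set (ℕ → ℤ)) := by rw [hgen]; trivial
    refine AddSubgroup.closure_induction ?_ ?_ ?_ ?_ hv
    · intro u hu
      exact ⟨⟨u, hu⟩, 0, by simp⟩
    · exact ⟨0, 0, by simp⟩
    · rintro u v' - - ⟨a, b, rfl⟩ ⟨c, e, rfl⟩
      exact ⟨a + c, b + e, by push_cast; abel⟩
    · rintro u - ⟨a, b, rfl⟩
      exact ⟨b, a, by abel⟩
  -- well-definedness of the extension
  have hkey : ∀ a b c e : S,
      (a : ℕ → ℤ) - (b : ℕ → ℤ) = (c : ℕ → ℤ) - (e : ℕ → ℤ) →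
      g a - g b = g c - g e := by
    intro a b c e h
    rw [sub_eq_sub_iff_add_eq_add] at h ⊢
    have hS : a + e = c + b := Subtype.ext (by push_cast; exact h)
    have := congrArg g hS
    rwa [map_add, map_add] at this
  choose A B hAB using decomp
  -- the extended group homomorphism
  set f : (ℕ → ℤ) →+ (ℕ → ℤ) :=
    { toFun := fun v => g (A v) - g (B v)
      map_zero' := by
        have h := hkey (A 0) (B 0) 0 0 (by rw [← hAB 0]; simp)
        simpa using h
      map_add' := by
        intro u v
        have habs : (↑(A (u + v)) : ℕ → ℤ) - ↑(B (u + v))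
            = ↑(A u + A v) - ↑(B u + B v) := by
          calc (↑(A (u + v)) : ℕ → ℤ) - ↑(B (u + v)) = u + v := (hAB (u + v)).symm
            _ = (↑(A u) - ↑(B u)) + (↑(A v) - ↑(B v)) := by rw [← hAB u, ← hAB v]
            _ = ↑(A u + A v) - ↑(B u + B v) := by push_cast; abel
        have h := hkey (A (u + v)) (B (u + v)) (A u + A v) (B u + B v) habs
        rw [map_add, map_add] at h
        show g (A (u + v)) - g (B (u + v))
          = (g (A u) - g (B u)) + (g (A v) - g (B v))
        rw [h]
        abel } with hf
  have hfg : ∀ t : S, f (t : ℕ → ℤ) = g t := by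
    intro t
    have h := hkey (A (t : ℕ → ℤ)) (B (t : ℕ → ℤ)) t 0 (by rw [← hAB (t : ℕ → ℤ)]; simp)
    simpa [hf] using h
  rw [continuous_induced_rng]
  refine continuous_pi fun n => ?_
  set φ : (ℕ → ℤ) →+ ℤ := (Pi.evalAddMonoidHom (fun _ => ℤ) n).comp f with hφ
  obtain ⟨N, hN⟩ := specker φ
  have hcoord : ∀ s : S, (Subtype.val ∘ β) s n = φ (s : ℕ → ℤ) := by
    intro s
    simp [hφ, hfg s, hg]
  have : (fun s : S => (Subtype.val ∘ β) s n) = fun s : S => φ (s : ℕ → ℤ) := by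
    funext s; exact hcoord s
  show Continuous fun s : S => (Subtype.val ∘ β) s n
  rw [this]
  refine IsLocallyConstant.continuous ?_
  rw [IsLocallyConstant.iff_exists_open]
  intro t
  refine ⟨{u : S | ∀ k < N, (u : ℕ → ℤ) k = (t : ℕ → ℤ) k}, ?_, fun k _ => rfl, ?_⟩
  · have heq : {u : S | ∀ k < N, (u : ℕ → ℤ) k = (t : ℕ → ℤ) k}
        = Subtype.val ⁻¹'
          (⋂ k ∈ Finset.range N, (fun v : ℕ → ℤ => v k) ⁻¹' {(t : ℕ → ℤ) k}) := by
      ext u; simp [Finset.mem_range]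
    rw [heq]
    exact (isOpen_biInter_finset fun k _ =>
      (isOpen_discrete _).preimage (continuous_apply k)).preimage continuous_subtype_val
  · intro u hu
    have hz : φ ((u : ℕ → ℤ) - (t : ℕ → ℤ)) = 0 := by
      apply hN
      intro k hk
      simp [hu k hk]
    rw [map_sub] at hz
    linarith
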